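/- (S_1, S_1, (1, ∞), (1, ∞))↓ holds: from every configuration in which both robots are in state S_1 with observed distances greater than 1, every fair SSynch execution of Algorithm 1 solves rendezvous. -/

import Mathlib

/-- Points in the plane. -/
abbrev Pt := EuclideanSpace ℝ (Fin 2)

/-- Observed directions. -/
inductive Dir | left | right
deriving DecidableEq

/-- The six internal states of Algorithm 1. -/
inductive St | start | s1 | s2 (d : Dir) | s3 | finish
deriving DecidableEq

/-- A local coordinate frame: an orthogonal linear map of the plane. -/
abbrev Frame := Pt ≃ₗᵢ[ℝ] Pt

/-- Observed direction of a local vector `v`: `right` if its first coordinate is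
positive, or is zero with positive second coordinate; `left` otherwise. -/
noncomputable def obsDir (v : Pt) : Dir :=
  if 0 < v 0 ∨ (v 0 = 0 ∧ 0 < v 1) then Dir.right else Dir.left

/-- Local vector observed by a robot with unit distance `u` and frame `A`,
located at `p`, looking at the other robot at `q`. -/
noncomputable def obsVec (u : ℝ) (A : Frame) (p q : Pt) : Pt := u⁻¹ • (A (q - p))

/-- Observed distance. -/
noncomputable def obsDist (u : ℝ) (p q : Pt) : ℝ := ‖q - p‖ / u

/-- Algorithm 1: given the current state, the observed distance `d` and the
observed direction `dir`, returns the new state and the coefficient `μ` such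
that the (global) destination is `p + μ • (q - p)` (i.e. local destination `μ • v`). -/
noncomputable def algo1 (s : St) (d : ℝ) (dir : Dir) : St × ℝ :=
  if d = 0 then (s, 0)
  else match s with
  | .start => if d < 1 then (.s1, 1 - 1/d) else (.s2 dir, 1)
  | .s1 => if d ≤ 1 then (.finish, 0) else (.s2 dir, 1)
  | .s2 d' =>
      if dir = d' then (.finish, 1)
      else if d < 1/2 then (.finish, 0)
      else if d < 1 then (.s3, 1/2)
      else (.s2 d', 1/2)
  | .s3 => if d < 1/4 then (.finish, 0) else (.finish, 1)
  | .finish => if d ≤ 1 then (.finish, 0) else (.finish, 1)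

/-- A configuration: positions and internal states of the two robots
(robot `r` is `false`, robot `s` is `true`). -/
structure Config where
  pos : Bool → Pt
  st : Bool → St

/-- Result (new position, new state) of one activation of robot `i`. -/
noncomputable def stepRobot (u : Bool → ℝ) (A : Bool → Frame) (c : Config) (i : Bool) :
    Pt × St :=
  let p := c.pos i
  let q := c.pos (!i)
  let d := obsDist (u i) p q
  let dir := obsDir (obsVec (u i) (A i) p q)
  let r := algo1 (c.st i) d dir
  (p + r.2 • (q - p), r.1)

/-- One synchronous round in which exactly the robots `i` with `act i = true`
are activated; both activated robots observe the same (pre-round) configuration,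
and rigidly reach their computed destinations. -/
noncomputable def stepConfig (u : Bool → ℝ) (A : Bool → Frame) (act : Bool → Bool)
    (c : Config) : Config where
  pos i := if act i then (stepRobot u A c i).1 else c.pos i
  st i := if act i then (stepRobot u A c i).2 else c.st i

/-- The configuration after `n` rounds of the SSynch execution of Algorithm 1
under schedule `sched`, starting from `c0`. -/
noncomputable def run (u : Bool → ℝ) (A : Bool → Frame) (sched : ℕ → Bool → Bool)
    (c0 : Config) : ℕ → Config
  | 0 => c0
  | n + 1 => stepConfig u A (sched n) (run u A sched c0 n)

/-- A legal fair SSynch schedule: at every round a nonempty set of robots is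
activated, and each robot is activated infinitely often. -/
def FairSched (sched : ℕ → Bool → Bool) : Prop :=
  (∀ n, sched n false = true ∨ sched n true = true) ∧
  (∀ i n, ∃ m, n ≤ m ∧ sched m i = true)

/-- Rendezvous is solved: from some round on, the two robots occupy the same
point and never move again. -/
noncomputable def Solves (u : Bool → ℝ) (A : Bool → Frame) (sched : ℕ → Bool → Bool)
    (c0 : Config) : Prop :=
  ∃ N : ℕ, ∀ n, N ≤ n → ∀ i, (run u A sched c0 n).pos i = (run u A sched c0 N).pos false

/-- Conditions on a robot: one of the six internal states, or `S₂⁼` / `S₂≠`. -/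
inductive Cond | start | s1 | s2 (d : Dir) | s2eq | s2ne | s3 | finish

/-- A robot in state `s` whose currently observed direction is `dir`
satisfies the condition. -/
def Cond.sat : Cond → St → Dir → Prop
  | .start, s, _ => s = .start
  | .s1, s, _ => s = .s1
  | .s2 d', s, _ => s = .s2 d'
  | .s2eq, s, dir => s = .s2 dir
  | .s2ne, s, dir => ∃ d', s = St.s2 d' ∧ d' ≠ dir
  | .s3, s, _ => s = .s3
  | .finish, s, _ => s = .finish

/-- `(S_a, S_b, I_a, I_b)↓` : for every choice of the units and frames, from
every configuration in which robot `r` satisfies condition `Ca` with observed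
distance in `Ia` and robot `s` satisfies condition `Cb` with observed distance
in `Ib`, every fair SSynch execution of Algorithm 1 solves Rendezvous. -/
noncomputable def Down (Ca Cb : Cond) (Ia Ib : Set ℝ) : Prop :=
  ∀ (u : Bool → ℝ) (A : Bool → Frame), (∀ i, 0 < u i) →
    ∀ c0 : Config,
      Ca.sat (c0.st false)
        (obsDir (obsVec (u false) (A false) (c0.pos false) (c0.pos true))) →
      obsDist (u false) (c0.pos false) (c0.pos true) ∈ Ia →
      Cb.sat (c0.st true)
        (obsDir (obsVec (u true) (A true) (c0.pos true) (c0.pos false))) →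
      obsDist (u true) (c0.pos true) (c0.pos false) ∈ Ib →
      ∀ sched : ℕ → Bool → Bool, FairSched sched → Solves u A sched c0



lemma Dir.two (a b c : Dir) (h1 : a ≠ b) (h2 : c ≠ b) : a = c := by
  cases a <;> cases b <;> cases c <;> simp_all

lemma obsDir_smul_pos (c : ℝ) (hc : 0 < c) (v : Pt) : obsDir (c • v) = obsDir v := by
  unfold obsDir
  have h0 : (c • v) 0 = c * v 0 := rfl
  have h1 : (c • v) 1 = c * v 1 := rfl
  rw [h0, h1]
  congr 1
  apply propext
  constructor
  · rintro (h | ⟨h, h'⟩)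
    · exact Or.inl (by nlinarith)
    · refine Or.inr ⟨?_, by nlinarith⟩
      rcases mul_eq_zero.mp h with h | h
      · exact absurd h (ne_of_gt hc)
      · exact h
  · rintro (h | ⟨h, h'⟩)
    · exact Or.inl (mul_pos hc h)
    · exact Or.inr ⟨by rw [h, mul_zero], mul_pos hc h'⟩

lemma Pt.exists_coord_ne (v : Pt) (hv : v ≠ 0) : v 0 ≠ 0 ∨ v 1 ≠ 0 := by
  by_contra h
  push_neg at h
  apply hv
  ext i
  fin_cases i
  · exact h.1
  · exact h.2

lemma obsDir_neg_ne (v : Pt) (hv : v ≠ 0) : obsDir (-v) ≠ obsDir v := by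
  have h0 : (-v) 0 = -(v 0) := rfl
  have h1 : (-v) 1 = -(v 1) := rfl
  unfold obsDir
  rw [h0, h1]
  rcases lt_trichotomy (v 0) 0 with h | h | h
  · rw [if_pos (Or.inl (by linarith)), if_neg (by rintro (h' | ⟨h1, h2⟩) <;> linarith)]
    simp
  · rcases Pt.exists_coord_ne v hv with h' | h'
    · exact absurd h h'
    rcases lt_trichotomy (v 1) 0 with h2 | h2 | h2
    · rw [if_pos (Or.inr ⟨by rw [h, neg_zero], by linarith⟩),
        if_neg (by rintro (h' | ⟨h1', h2'⟩) <;> linarith)]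
      simp
    · exact absurd h2 h'
    · rw [if_neg (by rintro (h'' | ⟨h1', h2'⟩) <;> linarith), if_pos (Or.inr ⟨h, h2⟩)]
      simp
  · rw [if_neg (by rintro (h' | ⟨h1', h2'⟩) <;> linarith), if_pos (Or.inl h)]
    simp

lemma obsDir_smul_neg (c : ℝ) (hc : c < 0) (v : Pt) (hv : v ≠ 0) :
    obsDir (c • v) ≠ obsDir v := by
  have : c • v = -((-c) • v) := by module
  rw [this]
  have h2 := obsDir_neg_ne ((-c) • v) (by
    intro h
    rcases smul_eq_zero.mp h with h | h
    · linarith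
    · exact hv h)
  rw [obsDir_smul_pos (-c) (by linarith) v] at h2
  exact h2

lemma obsVec_scale (u : ℝ) (A : Frame) (p q p' q' : Pt) (c : ℝ)
    (h : q' - p' = c • (q - p)) : obsVec u A p' q' = c • obsVec u A p q := by
  unfold obsVec
  rw [h, map_smul, smul_comm]

lemma obsVec_ne_zero (u : ℝ) (A : Frame) (p q : Pt) (hu : 0 < u) (h : q ≠ p) :
    obsVec u A p q ≠ 0 := by
  unfold obsVec
  intro hh
  rcases smul_eq_zero.mp hh with hh | hh
  · exact absurd (inv_eq_zero.mp hh) (ne_of_gt hu)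
  · exact sub_ne_zero_of_ne h (by
      have := A.injective (a₁ := q - p) (a₂ := 0) (by simpa using hh)
      simpa using this)

lemma obsDist_scale (u : ℝ) (hu : 0 < u) (p q p' q' : Pt) (c : ℝ)
    (h : q' - p' = c • (q - p)) : obsDist u p' q' = |c| * obsDist u p q := by
  unfold obsDist
  rw [h, norm_smul, Real.norm_eq_abs, mul_div_assoc]

lemma obsDist_pos (u : ℝ) (hu : 0 < u) (p q : Pt) (h : q ≠ p) : 0 < obsDist u p q :=
  div_pos (norm_pos_iff.mpr (sub_ne_zero_of_ne h)) hu

lemma obsDist_self (u : ℝ) (p : Pt) : obsDist u p p = 0 := by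
  unfold obsDist; rw [sub_self, norm_zero, zero_div]

-- ===== framework =====
lemma Config.ext' (c1 c2 : Config) (h1 : ∀ i, c1.pos i = c2.pos i)
    (h2 : ∀ i, c1.st i = c2.st i) : c1 = c2 := by
  cases c1; cases c2
  simp only [Config.mk.injEq]
  exact ⟨funext h1, funext h2⟩

noncomputable def dOf (u : Bool → ℝ) (c : Config) (i : Bool) : ℝ :=
  obsDist (u i) (c.pos i) (c.pos (!i))

noncomputable def dirOf (u : Bool → ℝ) (A : Bool → Frame) (c : Config) (i : Bool) : Dir :=
  obsDir (obsVec (u i) (A i) (c.pos i) (c.pos (!i)))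

lemma stepRobot_eq (u : Bool → ℝ) (A : Bool → Frame) (c : Config) (i : Bool) :
    stepRobot u A c i =
      (c.pos i + (algo1 (c.st i) (dOf u c i) (dirOf u A c i)).2 • (c.pos (!i) - c.pos i),
       (algo1 (c.st i) (dOf u c i) (dirOf u A c i)).1) := rfl

lemma dOf_ne_zero (u : Bool → ℝ) (c : Config) (i : Bool) (hu : 0 < u i)
    (h : c.pos (!i) ≠ c.pos i) : dOf u c i ≠ 0 :=
  ne_of_gt (obsDist_pos _ hu _ _ h)

-- algo1 evaluation lemmas
lemma algo1_zero (s : St) (dir : Dir) : algo1 s 0 dir = (s, 0) := by simp [algo1]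

lemma algo1_finish_le {d : ℝ} (hd : d ≠ 0) (h : d ≤ 1) (dir : Dir) :
    algo1 .finish d dir = (.finish, 0) := by simp [algo1, hd, h]

lemma algo1_s1_gt {d : ℝ} (h : 1 < d) (dir : Dir) :
    algo1 .s1 d dir = (.s2 dir, 1) := by
  have hd : d ≠ 0 := by linarith
  simp [algo1, hd, not_le.mpr h]

lemma algo1_s2_eq {d : ℝ} (hd : d ≠ 0) (d' : Dir) :
    algo1 (.s2 d') d d' = (.finish, 1) := by simp [algo1, hd]

lemma algo1_s2_ne_small {d : ℝ} (hd : d ≠ 0) {dir d' : Dir} (hne : dir ≠ d')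
    (h : d < 1/2) : algo1 (.s2 d') d dir = (.finish, 0) := by
  simp only [algo1, if_neg hd]
  rw [if_neg (by simp [hne]), if_pos (by linarith : d < 1/2)]

lemma algo1_s2_ne_mid {d : ℝ} (hd : d ≠ 0) {dir d' : Dir} (hne : dir ≠ d')
    (h1 : ¬ d < 1/2) (h2 : d < 1) : algo1 (.s2 d') d dir = (.s3, 1/2) := by
  simp only [algo1, if_neg hd]
  rw [if_neg (by simp [hne]), if_neg h1, if_pos h2]

lemma algo1_s2_ne_big {d : ℝ} (hd : d ≠ 0) {dir d' : Dir} (hne : dir ≠ d')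
    (h : ¬ d < 1) : algo1 (.s2 d') d dir = (.s2 d', 1/2) := by
  have h1 : ¬ d < 1/2 := by intro hh; exact h (by linarith)
  simp only [algo1, if_neg hd]
  rw [if_neg (by simp [hne]), if_neg h1, if_neg h]

lemma algo1_s3_small {d : ℝ} (hd : d ≠ 0) (h : d < 1/4) (dir : Dir) :
    algo1 .s3 d dir = (.finish, 0) := by
  simp only [algo1, if_neg hd]
  rw [if_pos h]

lemma algo1_s3_big {d : ℝ} (hd : d ≠ 0) (h : ¬ d < 1/4) (dir : Dir) :
    algo1 .s3 d dir = (.finish, 1) := by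
  simp only [algo1, if_neg hd]
  rw [if_neg h]

section Dyn

variable (u : Bool → ℝ) (A : Bool → Frame) (sched : ℕ → Bool → Bool) (c0 : Config)

lemma run_succ (t : ℕ) :
    run u A sched c0 (t+1) = stepConfig u A (sched t) (run u A sched c0 t) := rfl

lemma run_pos_act {t : ℕ} {i : Bool} (h : sched t i = true) :
    (run u A sched c0 (t+1)).pos i = (run u A sched c0 t).pos i +
      (algo1 ((run u A sched c0 t).st i) (dOf u (run u A sched c0 t) i)
        (dirOf u A (run u A sched c0 t) i)).2 •
      ((run u A sched c0 t).pos (!i) - (run u A sched c0 t).pos i) := by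
  rw [run_succ]
  simp [stepConfig, h, stepRobot_eq]

lemma run_st_act {t : ℕ} {i : Bool} (h : sched t i = true) :
    (run u A sched c0 (t+1)).st i =
      (algo1 ((run u A sched c0 t).st i) (dOf u (run u A sched c0 t) i)
        (dirOf u A (run u A sched c0 t) i)).1 := by
  rw [run_succ]
  simp [stepConfig, h, stepRobot_eq]

lemma run_pos_idle {t : ℕ} {i : Bool} (h : sched t i = false) :
    (run u A sched c0 (t+1)).pos i = (run u A sched c0 t).pos i := by
  rw [run_succ]
  simp [stepConfig, h]

lemma run_st_idle {t : ℕ} {i : Bool} (h : sched t i = false) :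
    (run u A sched c0 (t+1)).st i = (run u A sched c0 t).st i := by
  rw [run_succ]
  simp [stepConfig, h]

/-- Once the robots meet, positions are frozen forever. -/
lemma freeze {t : ℕ}
    (h : (run u A sched c0 t).pos false = (run u A sched c0 t).pos true) :
    ∀ k, t ≤ k → ∀ i, (run u A sched c0 k).pos i = (run u A sched c0 t).pos false := by
  intro k hk
  induction k, hk using Nat.le_induction with
  | base =>
    intro i
    cases i
    · rfl
    · exact h.symm
  | succ k hk ih =>
    intro i
    have hpos : (run u A sched c0 k).pos (!i) = (run u A sched c0 k).pos i := by
      rw [ih i, ih (!i)]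
    have hd : dOf u (run u A sched c0 k) i = 0 := by
      unfold dOf
      rw [hpos, obsDist_self]
    cases hsi : sched k i
    · rw [run_pos_idle u A sched c0 hsi]
      exact ih i
    · rw [run_pos_act u A sched c0 hsi, hd, algo1_zero]
      simp only [zero_smul, add_zero]
      exact ih i

/-- A config with a satisfied `finish` robot and the other robot idle does not change. -/
lemma stepConfig_inert (act : Bool → Bool) (c : Config) (a : Bool)
    (h1 : c.st a = .finish) (h2 : dOf u c a ≤ 1) (hpos : c.pos (!a) ≠ c.pos a)
    (hu : 0 < u a) (hb : act (!a) = false) : stepConfig u A act c = c := by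
  have hd : dOf u c a ≠ 0 := dOf_ne_zero u c a hu hpos
  apply Config.ext'
  · intro i
    by_cases hia : i = a
    · subst hia
      cases hai : act i
      · simp [stepConfig, hai]
      · simp only [stepConfig, hai, if_pos, stepRobot_eq, h1]
        rw [algo1_finish_le hd h2]
        simp
    · have : i = !a := by cases i <;> cases a <;> simp_all
      subst this
      simp [stepConfig, hb]
  · intro i
    by_cases hia : i = a
    · subst hia
      cases hai : act i
      · simp [stepConfig, hai]
      · simp only [stepConfig, hai, if_pos, stepRobot_eq, h1]
        rw [algo1_finish_le hd h2]
    · have : i = !a := by cases i <;> cases a <;> simp_all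
      subst this
      simp [stepConfig, hb]

/-- Wait (via fairness) for the next activation of `b`, while `!b` is a
satisfied finished robot: the configuration does not change meanwhile. -/
lemma reach_act (hu : ∀ i, 0 < u i) (hsf : FairSched sched) (b : Bool) (t : ℕ)
    (h1 : (run u A sched c0 t).st (!b) = .finish)
    (h2 : dOf u (run u A sched c0 t) (!b) ≤ 1)
    (hpos : (run u A sched c0 t).pos b ≠ (run u A sched c0 t).pos (!b)) :
    ∃ m, t ≤ m ∧ sched m b = true ∧ run u A sched c0 m = run u A sched c0 t := by
  obtain ⟨m0, hm0, hb⟩ := hsf.2 b t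
  suffices h : ∀ k t', t ≤ t' → run u A sched c0 t' = run u A sched c0 t →
      sched (t' + k) b = true →
      ∃ m, t ≤ m ∧ sched m b = true ∧ run u A sched c0 m = run u A sched c0 t by
    exact h (m0 - t) t le_rfl rfl (by rwa [Nat.add_sub_cancel' hm0])
  intro k
  induction k with
  | zero => exact fun t' ht' heq hs => ⟨t', ht', by simpa using hs, heq⟩
  | succ k ih =>
    intro t' ht' heq hs
    by_cases hb' : sched t' b = true
    · exact ⟨t', ht', hb', heq⟩
    · have hb'' : sched t' (!(!b)) = false := by
        rw [Bool.not_not]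
        exact Bool.not_eq_true _ ▸ (by simpa using hb')
      have hstep : run u A sched c0 (t'+1) = run u A sched c0 t := by
        rw [run_succ, heq]
        rw [stepConfig_inert u A _ _ (!b) h1 h2 (by rwa [Bool.not_not]) (hu _) hb'']
      exact ih (t'+1) (le_trans ht' (Nat.le_succ _)) hstep
        (by rw [Nat.add_right_comm]; exact hs)

end Dyn

/-- Facts about scaled differences: distance, direction, distinctness. -/
lemma diff_facts (u : Bool → ℝ) (A : Bool → Frame) (c c' : Config) (i : Bool) (γ : ℝ)
    (hu : 0 < u i)
    (h : c'.pos (!i) - c'.pos i = γ • (c.pos (!i) - c.pos i)) :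
    dOf u c' i = |γ| * dOf u c i
    ∧ (0 < γ → dirOf u A c' i = dirOf u A c i)
    ∧ (γ < 0 → c.pos (!i) ≠ c.pos i → dirOf u A c' i ≠ dirOf u A c i)
    ∧ (γ ≠ 0 → c.pos (!i) ≠ c.pos i → c'.pos (!i) ≠ c'.pos i) := by
  refine ⟨obsDist_scale (u i) hu _ _ _ _ γ h, ?_, ?_, ?_⟩
  · intro hγ
    unfold dirOf
    rw [obsVec_scale (u i) (A i) _ _ _ _ γ h, obsDir_smul_pos γ hγ]
  · intro hγ hne
    unfold dirOf
    rw [obsVec_scale (u i) (A i) _ _ _ _ γ h]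
    exact obsDir_smul_neg γ hγ _ (obsVec_ne_zero (u i) (A i) _ _ hu hne)
  · intro hγ hne he
    have hz : γ • (c.pos (!i) - c.pos i) ≠ 0 := smul_ne_zero hγ (sub_ne_zero_of_ne hne)
    apply hz
    rw [← h, he, sub_self]

/-- When robot `j` moves half-way and the other is static, both difference
vectors are halved. -/
lemma half_diffs (c c' : Config) (j : Bool)
    (h1 : c'.pos j = c.pos j + (1/2 : ℝ) • (c.pos (!j) - c.pos j))
    (h2 : c'.pos (!j) = c.pos (!j)) :
    ∀ i, c'.pos (!i) - c'.pos i = (1/2 : ℝ) • (c.pos (!i) - c.pos i) := by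
  intro i
  by_cases hij : i = j
  · subst hij
    rw [h1, h2]
    module
  · have hij' : i = !j := by cases i <;> cases j <;> simp_all
    subst hij'
    rw [Bool.not_not, h1, h2]
    module

lemma snd_pair (s : St) (r : ℝ) : (s, r).2 = r := rfl


lemma two_move_diffs (c c' : Config) (j : Bool) (α β : ℝ)
    (h1 : c'.pos j = c.pos j + α • (c.pos (!j) - c.pos j))
    (h2 : c'.pos (!j) = c.pos (!j) + β • (c.pos j - c.pos (!j))) :
    ∀ i, c'.pos (!i) - c'.pos i = (1 - α - β) • (c.pos (!i) - c.pos i) := by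
  intro i
  by_cases hij : i = j
  · subst hij
    rw [h1, h2]
    module
  · have hij' : i = !j := by cases i <;> cases j <;> simp_all
    subst hij'
    rw [Bool.not_not, h1, h2]
    module

lemma dOf_congr (u : Bool → ℝ) (c c' : Config) (i : Bool)
    (h1 : c'.pos i = c.pos i) (h2 : c'.pos (!i) = c.pos (!i)) :
    dOf u c' i = dOf u c i := by
  unfold dOf
  rw [h1, h2]

lemma dirOf_congr (u : Bool → ℝ) (A : Bool → Frame) (c c' : Config) (i : Bool)
    (h1 : c'.pos i = c.pos i) (h2 : c'.pos (!i) = c.pos (!i)) :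
    dirOf u A c' i = dirOf u A c i := by
  unfold dirOf
  rw [h1, h2]

lemma meets_of (c' : Config) (b : Bool) (x : Pt) (h1 : c'.pos b = x)
    (h2 : c'.pos (!b) = x) : c'.pos false = c'.pos true := by
  cases b <;> simp_all

section Sol

variable (u : Bool → ℝ) (A : Bool → Frame) (sched : ℕ → Bool → Bool) (c0 : Config)

/-- A satisfied finished robot keeps its position and state over a round. -/
lemma finish_keeps (hu : ∀ i, 0 < u i) {t : ℕ} {b : Bool}
    (h1 : (run u A sched c0 t).st b = .finish)
    (h2 : dOf u (run u A sched c0 t) b ≤ 1)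
    (h3 : (run u A sched c0 t).pos (!b) ≠ (run u A sched c0 t).pos b) :
    (run u A sched c0 (t+1)).pos b = (run u A sched c0 t).pos b ∧
    (run u A sched c0 (t+1)).st b = .finish := by
  have hd : dOf u (run u A sched c0 t) b ≠ 0 := dOf_ne_zero u _ b (hu b) h3
  cases hs : sched t b
  · exact ⟨run_pos_idle u A sched c0 hs, (run_st_idle u A sched c0 hs).trans h1⟩
  · constructor
    · rw [run_pos_act u A sched c0 hs, h1, algo1_finish_le hd h2]
      simp
    · rw [run_st_act u A sched c0 hs, h1, algo1_finish_le hd h2]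

/-- A robot that moves onto the static other robot produces a meeting. -/
lemma osolves3 (hu : ∀ i, 0 < u i) (hsf : FairSched sched) (t : ℕ) (b : Bool)
    (hfin : (run u A sched c0 t).st (!b) = .finish)
    (hda : dOf u (run u A sched c0 t) (!b) ≤ 1)
    (hpos : (run u A sched c0 t).pos b ≠ (run u A sched c0 t).pos (!b))
    (hst : (run u A sched c0 t).st b = .s3)
    (hd : 1/4 ≤ dOf u (run u A sched c0 t) b) :
    ∃ m, t ≤ m ∧ (run u A sched c0 m).pos false = (run u A sched c0 m).pos true := by
  obtain ⟨m, htm, hbact, heq⟩ := reach_act u A sched c0 hu hsf b t hfin hda hpos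
  have hd0t : dOf u (run u A sched c0 t) b ≠ 0 := dOf_ne_zero u _ b (hu b) (Ne.symm hpos)
  have hposb : (run u A sched c0 (m+1)).pos b = (run u A sched c0 t).pos (!b) := by
    rw [run_pos_act u A sched c0 hbact, heq, hst,
      algo1_s3_big hd0t (not_lt.mpr hd) _, snd_pair]
    module
  have hkeep := finish_keeps u A sched c0 hu (t := m)
    (by rw [heq]; exact hfin) (by rw [heq]; exact hda)
    (by rw [heq, Bool.not_not]; exact hpos)
  refine ⟨m+1, by omega,
    meets_of _ b ((run u A sched c0 t).pos (!b)) hposb (hkeep.1.trans (by rw [heq]))⟩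

/-- An `s2` robot against a static finished robot eventually meets it. -/
lemma osolves2 (hu : ∀ i, 0 < u i) (hsf : FairSched sched) :
    ∀ n t (b : Bool) (d' : Dir),
    (run u A sched c0 t).st (!b) = .finish →
    dOf u (run u A sched c0 t) (!b) ≤ 1 →
    (run u A sched c0 t).pos b ≠ (run u A sched c0 t).pos (!b) →
    (run u A sched c0 t).st b = .s2 d' →
    (dirOf u A (run u A sched c0 t) b ≠ d' → 1/2 ≤ dOf u (run u A sched c0 t) b) →
    dOf u (run u A sched c0 t) b < 2^n →
    ∃ m, t ≤ m ∧ (run u A sched c0 m).pos false = (run u A sched c0 m).pos true := by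
  intro n
  induction n with
  | zero =>
    intro t b d' hfin hda hpos hst hdir hlt
    obtain ⟨m, htm, hbact, heq⟩ := reach_act u A sched c0 hu hsf b t hfin hda hpos
    have hd0 : dOf u (run u A sched c0 t) b ≠ 0 := dOf_ne_zero u _ b (hu b) (Ne.symm hpos)
    by_cases hdeq : dirOf u A (run u A sched c0 t) b = d'
    · -- moves onto the other robot
      have hposb : (run u A sched c0 (m+1)).pos b = (run u A sched c0 m).pos (!b) := by
        rw [run_pos_act u A sched c0 hbact, heq, hst, hdeq, algo1_s2_eq hd0 d', snd_pair]
        module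
      have hkeep := finish_keeps u A sched c0 hu (t := m)
        (by rw [heq]; exact hfin) (by rw [heq]; exact hda)
        (by rw [heq, Bool.not_not]; exact hpos)
      refine ⟨m+1, by omega,
        meets_of _ b ((run u A sched c0 m).pos (!b)) hposb (by rw [hkeep.1, heq])⟩
    · -- d ∈ [1/2, 1) : become s3 at midpoint, then osolves3
      have hge := hdir hdeq
      have hlt1 : dOf u (run u A sched c0 t) b < 1 := by
        have : (2:ℝ)^0 = 1 := by norm_num
        linarith [hlt, this.le]
      have halg : algo1 ((run u A sched c0 m).st b) (dOf u (run u A sched c0 m) b)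
          (dirOf u A (run u A sched c0 m) b) = (.s3, 1/2) := by
        rw [heq, hst]
        exact algo1_s2_ne_mid hd0 hdeq (not_lt.mpr hge) hlt1
      have hposb : (run u A sched c0 (m+1)).pos b = (run u A sched c0 t).pos b +
          (1/2 : ℝ) • ((run u A sched c0 t).pos (!b) - (run u A sched c0 t).pos b) := by
        rw [run_pos_act u A sched c0 hbact, halg, heq]
      have hstb : (run u A sched c0 (m+1)).st b = .s3 := by
        rw [run_st_act u A sched c0 hbact, halg]
      have hkeep := finish_keeps u A sched c0 hu (t := m)
        (by rw [heq]; exact hfin) (by rw [heq]; exact hda)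
        (by rw [heq, Bool.not_not]; exact hpos)
      have hdiffs := half_diffs (run u A sched c0 t) (run u A sched c0 (m+1)) b hposb
        (by rw [hkeep.1, heq])
      have hfb := diff_facts u A _ _ b (1/2) (hu b) (hdiffs b)
      have hfnb := diff_facts u A _ _ (!b) (1/2) (hu (!b)) (hdiffs (!b))
      have hposne : (run u A sched c0 (m+1)).pos b ≠ (run u A sched c0 (m+1)).pos (!b) := by
        have := hfnb.2.2.2 (by norm_num) (by rw [Bool.not_not]; exact hpos)
        rw [Bool.not_not] at this
        exact this
      obtain ⟨m2, hm2, hmeet⟩ := osolves3 u A sched c0 hu hsf (m+1) b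
        (hkeep.2)
        (by rw [hfnb.1, abs_of_pos (by norm_num : (0:ℝ) < 1/2)]; linarith)
        hposne hstb
        (by rw [hfb.1, abs_of_pos (by norm_num : (0:ℝ) < 1/2)]; linarith)
      exact ⟨m2, by omega, hmeet⟩
  | succ n ih =>
    intro t b d' hfin hda hpos hst hdir hlt
    obtain ⟨m, htm, hbact, heq⟩ := reach_act u A sched c0 hu hsf b t hfin hda hpos
    have hd0 : dOf u (run u A sched c0 t) b ≠ 0 := dOf_ne_zero u _ b (hu b) (Ne.symm hpos)
    by_cases hdeq : dirOf u A (run u A sched c0 t) b = d'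
    · have hposb : (run u A sched c0 (m+1)).pos b = (run u A sched c0 m).pos (!b) := by
        rw [run_pos_act u A sched c0 hbact, heq, hst, hdeq, algo1_s2_eq hd0 d', snd_pair]
        module
      have hkeep := finish_keeps u A sched c0 hu (t := m)
        (by rw [heq]; exact hfin) (by rw [heq]; exact hda)
        (by rw [heq, Bool.not_not]; exact hpos)
      refine ⟨m+1, by omega,
        meets_of _ b ((run u A sched c0 m).pos (!b)) hposb (by rw [hkeep.1, heq])⟩
    · have hge := hdir hdeq
      have hkeep := finish_keeps u A sched c0 hu (t := m)
        (by rw [heq]; exact hfin) (by rw [heq]; exact hda)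
        (by rw [heq, Bool.not_not]; exact hpos)
      by_cases hlt1 : dOf u (run u A sched c0 t) b < 1
      · -- midpoint, s3, then osolves3
        have halg : algo1 ((run u A sched c0 m).st b) (dOf u (run u A sched c0 m) b)
            (dirOf u A (run u A sched c0 m) b) = (.s3, 1/2) := by
          rw [heq, hst]
          exact algo1_s2_ne_mid hd0 hdeq (not_lt.mpr hge) hlt1
        have hposb : (run u A sched c0 (m+1)).pos b = (run u A sched c0 t).pos b +
            (1/2 : ℝ) • ((run u A sched c0 t).pos (!b) - (run u A sched c0 t).pos b) := by
          rw [run_pos_act u A sched c0 hbact, halg, heq]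
        have hstb : (run u A sched c0 (m+1)).st b = .s3 := by
          rw [run_st_act u A sched c0 hbact, halg]
        have hdiffs := half_diffs (run u A sched c0 t) (run u A sched c0 (m+1)) b hposb
          (by rw [hkeep.1, heq])
        have hfb := diff_facts u A _ _ b (1/2) (hu b) (hdiffs b)
        have hfnb := diff_facts u A _ _ (!b) (1/2) (hu (!b)) (hdiffs (!b))
        have hposne : (run u A sched c0 (m+1)).pos b ≠ (run u A sched c0 (m+1)).pos (!b) := by
          have := hfnb.2.2.2 (by norm_num) (by rw [Bool.not_not]; exact hpos)
          rw [Bool.not_not] at this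
          exact this
        obtain ⟨m2, hm2, hmeet⟩ := osolves3 u A sched c0 hu hsf (m+1) b
          (hkeep.2)
          (by rw [hfnb.1, abs_of_pos (by norm_num : (0:ℝ) < 1/2)]; linarith)
          hposne hstb
          (by rw [hfb.1, abs_of_pos (by norm_num : (0:ℝ) < 1/2)]; linarith)
        exact ⟨m2, by omega, hmeet⟩
      · -- stays s2, halves: induction
        have halg : algo1 ((run u A sched c0 m).st b) (dOf u (run u A sched c0 m) b)
            (dirOf u A (run u A sched c0 m) b) = (.s2 d', 1/2) := by
          rw [heq, hst]
          exact algo1_s2_ne_big hd0 hdeq hlt1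
        have hposb : (run u A sched c0 (m+1)).pos b = (run u A sched c0 t).pos b +
            (1/2 : ℝ) • ((run u A sched c0 t).pos (!b) - (run u A sched c0 t).pos b) := by
          rw [run_pos_act u A sched c0 hbact, halg, heq]
        have hstb : (run u A sched c0 (m+1)).st b = .s2 d' := by
          rw [run_st_act u A sched c0 hbact, halg]
        have hdiffs := half_diffs (run u A sched c0 t) (run u A sched c0 (m+1)) b hposb
          (by rw [hkeep.1, heq])
        have hfb := diff_facts u A _ _ b (1/2) (hu b) (hdiffs b)
        have hfnb := diff_facts u A _ _ (!b) (1/2) (hu (!b)) (hdiffs (!b))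
        have hposne : (run u A sched c0 (m+1)).pos b ≠ (run u A sched c0 (m+1)).pos (!b) := by
          have := hfnb.2.2.2 (by norm_num) (by rw [Bool.not_not]; exact hpos)
          rw [Bool.not_not] at this
          exact this
        have habs : |(1:ℝ)/2| = 1/2 := abs_of_pos (by norm_num)
        obtain ⟨m2, hm2, hmeet⟩ := ih (m+1) b d'
          hkeep.2
          (by rw [hfnb.1, habs]; linarith)
          hposne hstb
          (fun _ => by rw [hfb.1, habs]; linarith [not_lt.mp hlt1])
          (by rw [hfb.1, habs]
              have : dOf u (run u A sched c0 t) b < 2^(n+1) := hlt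
              have h2 : (2:ℝ)^(n+1) = 2 * 2^n := by ring
              linarith)
        exact ⟨m2, by omega, hmeet⟩


lemma sched_cases (sched : ℕ → Bool → Bool) (hsf : FairSched sched) (t : ℕ) (j : Bool) :
    (sched t j = true ∧ sched t (!j) = false) ∨
    (sched t j = false ∧ sched t (!j) = true) ∨
    (sched t j = true ∧ sched t (!j) = true) := by
  rcases hsf.1 t with h | h <;> cases j <;>
    cases hx : sched t false <;> cases hy : sched t true <;> simp_all

/-- Two `s3` robots, one of which is close (below 1/4) : rendezvous. -/
lemma fsolves (hu : ∀ i, 0 < u i) (hsf : FairSched sched) (t : ℕ) (a : Bool)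
    (hsta : (run u A sched c0 t).st a = .s3)
    (hstb : (run u A sched c0 t).st (!a) = .s3)
    (hda : dOf u (run u A sched c0 t) a < 1/4)
    (hdb : 1/4 ≤ dOf u (run u A sched c0 t) (!a))
    (hpos : (run u A sched c0 t).pos a ≠ (run u A sched c0 t).pos (!a)) :
    ∃ m, t ≤ m ∧ (run u A sched c0 m).pos false = (run u A sched c0 m).pos true := by
  have hposs : (run u A sched c0 t).pos (!a) ≠ (run u A sched c0 t).pos a := Ne.symm hpos
  have hd0a : dOf u (run u A sched c0 t) a ≠ 0 := dOf_ne_zero u _ a (hu a) hposs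
  have hd0b : dOf u (run u A sched c0 t) (!a) ≠ 0 := by
    apply dOf_ne_zero u _ (!a) (hu (!a))
    simp only [Bool.not_not]
    exact hpos
  rcases sched_cases sched hsf t a with ⟨h1, h2⟩ | ⟨h1, h2⟩ | ⟨h1, h2⟩
  · -- only `a` activated: it finishes without moving
    have hpa : (run u A sched c0 (t+1)).pos a = (run u A sched c0 t).pos a := by
      rw [run_pos_act u A sched c0 h1, hsta, algo1_s3_small hd0a hda _, snd_pair]
      simp
    have hsa : (run u A sched c0 (t+1)).st a = .finish := by
      rw [run_st_act u A sched c0 h1, hsta, algo1_s3_small hd0a hda _]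
    have hpb : (run u A sched c0 (t+1)).pos (!a) = (run u A sched c0 t).pos (!a) :=
      run_pos_idle u A sched c0 h2
    have hsb : (run u A sched c0 (t+1)).st (!a) = .s3 :=
      (run_st_idle u A sched c0 h2).trans hstb
    have hdOfa : dOf u (run u A sched c0 (t+1)) a = dOf u (run u A sched c0 t) a :=
      dOf_congr u _ _ a hpa hpb
    have hdOfb : dOf u (run u A sched c0 (t+1)) (!a) = dOf u (run u A sched c0 t) (!a) :=
      dOf_congr u _ _ (!a) hpb (by simp only [Bool.not_not]; exact hpa)
    obtain ⟨m, hm, hmeet⟩ := osolves3 u A sched c0 hu hsf (t+1) (!a)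
      (by simp only [Bool.not_not]; exact hsa)
      (by simp only [Bool.not_not]
          rw [hdOfa]; linarith)
      (by rw [hpb]; simp only [Bool.not_not]; rw [hpa]; exact hposs)
      hsb
      (by rw [hdOfb]; exact hdb)
    exact ⟨m, by omega, hmeet⟩
  · -- only `!a` activated: it moves onto `a`
    have hpb : (run u A sched c0 (t+1)).pos (!a) = (run u A sched c0 t).pos a := by
      rw [run_pos_act u A sched c0 h2, hstb, algo1_s3_big hd0b (not_lt.mpr hdb) _, snd_pair]
      simp only [Bool.not_not]
      module
    have hpa : (run u A sched c0 (t+1)).pos a = (run u A sched c0 t).pos a :=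
      run_pos_idle u A sched c0 h1
    exact ⟨t+1, by omega, meets_of _ (!a) ((run u A sched c0 t).pos a) hpb
      (by simp only [Bool.not_not]; exact hpa)⟩
  · -- both activated
    have hpa : (run u A sched c0 (t+1)).pos a = (run u A sched c0 t).pos a := by
      rw [run_pos_act u A sched c0 h1, hsta, algo1_s3_small hd0a hda _, snd_pair]
      simp
    have hpb : (run u A sched c0 (t+1)).pos (!a) = (run u A sched c0 t).pos a := by
      rw [run_pos_act u A sched c0 h2, hstb, algo1_s3_big hd0b (not_lt.mpr hdb) _, snd_pair]
      simp only [Bool.not_not]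
      module
    exact ⟨t+1, by omega, meets_of _ (!a) ((run u A sched c0 t).pos a) hpb
      (by simp only [Bool.not_not]; exact hpa)⟩

set_option maxHeartbeats 1000000 in
/-- An `s3` robot and an `s2≠` robot: rendezvous. -/
lemma esolves (hu : ∀ i, 0 < u i) (hsf : FairSched sched) :
    ∀ n, ∀ t (b3 : Bool) (d' : Dir),
    (run u A sched c0 t).st b3 = .s3 →
    dOf u (run u A sched c0 t) b3 < 1/2 →
    (run u A sched c0 t).st (!b3) = .s2 d' →
    dirOf u A (run u A sched c0 t) (!b3) ≠ d' →
    (1/4 ≤ dOf u (run u A sched c0 t) b3 ∨ 1/2 ≤ dOf u (run u A sched c0 t) (!b3)) →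
    dOf u (run u A sched c0 t) (!b3) < 2^n →
    (run u A sched c0 t).pos b3 ≠ (run u A sched c0 t).pos (!b3) →
    ∃ m, t ≤ m ∧ (run u A sched c0 m).pos false = (run u A sched c0 m).pos true := by
  intro n
  induction n using Nat.strong_induction_on with
  | _ n ih =>
  intro t b3 d' hst3 hd3lt hst2 hdir hinv hbound hpos
  have hposs : (run u A sched c0 t).pos (!b3) ≠ (run u A sched c0 t).pos b3 := Ne.symm hpos
  have hpos' : (run u A sched c0 t).pos (!(!b3)) ≠ (run u A sched c0 t).pos (!b3) := by
    simp only [Bool.not_not]; exact hpos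
  have hd03 : dOf u (run u A sched c0 t) b3 ≠ 0 := dOf_ne_zero u _ b3 (hu b3) hposs
  have hd02 : dOf u (run u A sched c0 t) (!b3) ≠ 0 := dOf_ne_zero u _ (!b3) (hu (!b3)) hpos'
  have habs : |(1:ℝ)/2| = 1/2 := abs_of_pos (by norm_num)
  have habsn : |(-1:ℝ)/2| = 1/2 := by rw [abs_div]; norm_num
  rcases sched_cases sched hsf t b3 with ⟨h1, h2⟩ | ⟨h1, h2⟩ | ⟨h1, h2⟩
  · -- only the s3 robot is activated
    by_cases hc : 1/4 ≤ dOf u (run u A sched c0 t) b3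
    · -- it moves onto the other: meeting
      have hp3 : (run u A sched c0 (t+1)).pos b3 = (run u A sched c0 t).pos (!b3) := by
        rw [run_pos_act u A sched c0 h1, hst3, algo1_s3_big hd03 (not_lt.mpr hc) _, snd_pair]
        module
      exact ⟨t+1, by omega, meets_of _ b3 ((run u A sched c0 t).pos (!b3)) hp3
        (run_pos_idle u A sched c0 h2)⟩
    · -- it finishes in place
      have hd2ge : 1/2 ≤ dOf u (run u A sched c0 t) (!b3) := by
        rcases hinv with h | h
        · exact absurd h hc
        · exact h
      have hp3 : (run u A sched c0 (t+1)).pos b3 = (run u A sched c0 t).pos b3 := by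
        rw [run_pos_act u A sched c0 h1, hst3, algo1_s3_small hd03 (not_le.mp hc) _, snd_pair]
        simp
      have hs3 : (run u A sched c0 (t+1)).st b3 = .finish := by
        rw [run_st_act u A sched c0 h1, hst3, algo1_s3_small hd03 (not_le.mp hc) _]
      have hp2 : (run u A sched c0 (t+1)).pos (!b3) = (run u A sched c0 t).pos (!b3) :=
        run_pos_idle u A sched c0 h2
      have hdOf3 : dOf u (run u A sched c0 (t+1)) b3 = dOf u (run u A sched c0 t) b3 :=
        dOf_congr u _ _ b3 hp3 hp2
      have hdOf2 : dOf u (run u A sched c0 (t+1)) (!b3) = dOf u (run u A sched c0 t) (!b3) :=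
        dOf_congr u _ _ (!b3) hp2 (by simp only [Bool.not_not]; exact hp3)
      have hdir2 : dirOf u A (run u A sched c0 (t+1)) (!b3) = dirOf u A (run u A sched c0 t) (!b3) :=
        dirOf_congr u A _ _ (!b3) hp2 (by simp only [Bool.not_not]; exact hp3)
      obtain ⟨m, hm, hmeet⟩ := osolves2 u A sched c0 hu hsf n (t+1) (!b3) d'
        (by simp only [Bool.not_not]; exact hs3)
        (by simp only [Bool.not_not]; rw [hdOf3]; linarith [not_le.mp hc])
        (by rw [hp2]; simp only [Bool.not_not]; rw [hp3]; exact hposs)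
        ((run_st_idle u A sched c0 h2).trans hst2)
        (fun _ => by rw [hdOf2]; exact hd2ge)
        (by rw [hdOf2]; exact hbound)
      exact ⟨m, by omega, hmeet⟩
  · -- only the s2 robot is activated
    by_cases hsm : dOf u (run u A sched c0 t) (!b3) < 1/2
    · -- it finishes in place; s3 robot has d ≥ 1/4
      have hd3ge : 1/4 ≤ dOf u (run u A sched c0 t) b3 := by
        rcases hinv with h | h
        · exact h
        · linarith
      have hp2 : (run u A sched c0 (t+1)).pos (!b3) = (run u A sched c0 t).pos (!b3) := by
        rw [run_pos_act u A sched c0 h2, hst2, algo1_s2_ne_small hd02 hdir hsm, snd_pair]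
        simp
      have hs2 : (run u A sched c0 (t+1)).st (!b3) = .finish := by
        rw [run_st_act u A sched c0 h2, hst2, algo1_s2_ne_small hd02 hdir hsm]
      have hp3 : (run u A sched c0 (t+1)).pos b3 = (run u A sched c0 t).pos b3 :=
        run_pos_idle u A sched c0 h1
      have hdOf3 : dOf u (run u A sched c0 (t+1)) b3 = dOf u (run u A sched c0 t) b3 :=
        dOf_congr u _ _ b3 hp3 hp2
      have hdOf2 : dOf u (run u A sched c0 (t+1)) (!b3) = dOf u (run u A sched c0 t) (!b3) :=
        dOf_congr u _ _ (!b3) hp2 (by simp only [Bool.not_not]; exact hp3)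
      obtain ⟨m, hm, hmeet⟩ := osolves3 u A sched c0 hu hsf (t+1) b3
        hs2
        (by rw [hdOf2]; linarith)
        (by rw [hp3, hp2]; exact hpos)
        ((run_st_idle u A sched c0 h1).trans hst3)
        (by rw [hdOf3]; exact hd3ge)
      exact ⟨m, by omega, hmeet⟩
    · -- it moves to the midpoint
      have hp2 : (run u A sched c0 (t+1)).pos (!b3) = (run u A sched c0 t).pos (!b3) +
          (1/2 : ℝ) • ((run u A sched c0 t).pos (!(!b3)) - (run u A sched c0 t).pos (!b3)) := by
        by_cases hb : dOf u (run u A sched c0 t) (!b3) < 1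
        · rw [run_pos_act u A sched c0 h2, hst2, algo1_s2_ne_mid hd02 hdir hsm hb, snd_pair]
        · rw [run_pos_act u A sched c0 h2, hst2, algo1_s2_ne_big hd02 hdir hb, snd_pair]
      have hp3 : (run u A sched c0 (t+1)).pos b3 = (run u A sched c0 t).pos b3 :=
        run_pos_idle u A sched c0 h1
      have hdiffs := half_diffs (run u A sched c0 t) (run u A sched c0 (t+1)) (!b3) hp2
        (by simp only [Bool.not_not]; exact hp3)
      have hf3 := diff_facts u A _ _ b3 (1/2) (hu b3) (hdiffs b3)
      have hf2 := diff_facts u A _ _ (!b3) (1/2) (hu (!b3)) (hdiffs (!b3))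
      have hposnew : (run u A sched c0 (t+1)).pos b3 ≠ (run u A sched c0 (t+1)).pos (!b3) := by
        have := hf3.2.2.2 (by norm_num) hposs
        exact fun hh => this hh.symm
      have hs3' : (run u A sched c0 (t+1)).st b3 = .s3 :=
        (run_st_idle u A sched c0 h1).trans hst3
      by_cases hb : dOf u (run u A sched c0 t) (!b3) < 1
      · -- becomes s3 : two s3 robots, ours small
        have hs2' : (run u A sched c0 (t+1)).st (!b3) = .s3 := by
          rw [run_st_act u A sched c0 h2, hst2, algo1_s2_ne_mid hd02 hdir hsm hb]
        obtain ⟨m, hm, hmeet⟩ := fsolves u A sched c0 hu hsf (t+1) b3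
          hs3' hs2'
          (by rw [hf3.1, habs]; linarith)
          (by rw [hf2.1, habs]; linarith [not_lt.mp hsm])
          hposnew
        exact ⟨m, by omega, hmeet⟩
      · -- stays s2 : recurse with halved distance
        obtain ⟨k, rfl⟩ : ∃ k, n = k + 1 := by
          cases n with
          | zero =>
            exfalso
            have : (2:ℝ)^0 = 1 := by norm_num
            rw [this] at hbound
            exact hb (by linarith)
          | succ k => exact ⟨k, rfl⟩
        have hs2' : (run u A sched c0 (t+1)).st (!b3) = .s2 d' := by
          rw [run_st_act u A sched c0 h2, hst2, algo1_s2_ne_big hd02 hdir hb]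
        obtain ⟨m, hm, hmeet⟩ := ih k (by omega) (t+1) b3 d'
          hs3'
          (by rw [hf3.1, habs]; linarith)
          hs2'
          (by rw [hf2.2.1 (by norm_num)]; exact hdir)
          (Or.inr (by rw [hf2.1, habs]; linarith [not_lt.mp hb]))
          (by rw [hf2.1, habs]
              have h2k : (2:ℝ)^(k+1) = 2^k * 2 := pow_succ 2 k
              linarith)
          hposnew
        exact ⟨m, by omega, hmeet⟩
  · -- both activated
    by_cases hc3 : 1/4 ≤ dOf u (run u A sched c0 t) b3
    · -- s3 robot moves onto the (old) position of the s2 robot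
      have hp3 : (run u A sched c0 (t+1)).pos b3 = (run u A sched c0 t).pos (!b3) := by
        rw [run_pos_act u A sched c0 h1, hst3, algo1_s3_big hd03 (not_lt.mpr hc3) _, snd_pair]
        module
      have hs3' : (run u A sched c0 (t+1)).st b3 = .finish := by
        rw [run_st_act u A sched c0 h1, hst3, algo1_s3_big hd03 (not_lt.mpr hc3) _]
      by_cases hsm : dOf u (run u A sched c0 t) (!b3) < 1/2
      · -- s2 robot finishes in place: meeting
        have hp2 : (run u A sched c0 (t+1)).pos (!b3) = (run u A sched c0 t).pos (!b3) := by
          rw [run_pos_act u A sched c0 h2, hst2, algo1_s2_ne_small hd02 hdir hsm, snd_pair]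
          simp
        exact ⟨t+1, by omega, meets_of _ b3 ((run u A sched c0 t).pos (!b3)) hp3 hp2⟩
      · -- s2 robot moves to the midpoint: distance halves, direction flips
        have hp2 : (run u A sched c0 (t+1)).pos (!b3) = (run u A sched c0 t).pos (!b3) +
            (1/2 : ℝ) • ((run u A sched c0 t).pos (!(!b3)) - (run u A sched c0 t).pos (!b3)) := by
          by_cases hb : dOf u (run u A sched c0 t) (!b3) < 1
          · rw [run_pos_act u A sched c0 h2, hst2, algo1_s2_ne_mid hd02 hdir hsm hb, snd_pair]
          · rw [run_pos_act u A sched c0 h2, hst2, algo1_s2_ne_big hd02 hdir hb, snd_pair]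
        rw [Bool.not_not] at hp2
        have hdiffs := two_move_diffs (run u A sched c0 t) (run u A sched c0 (t+1)) b3 1 (1/2)
          (by rw [hp3]; module) hp2
        have hγ : (1:ℝ) - 1 - 1/2 = -1/2 := by norm_num
        rw [hγ] at hdiffs
        have hf3 := diff_facts u A _ _ b3 (-1/2) (hu b3) (hdiffs b3)
        have hf2 := diff_facts u A _ _ (!b3) (-1/2) (hu (!b3)) (hdiffs (!b3))
        have hposnew : (run u A sched c0 (t+1)).pos (!b3) ≠ (run u A sched c0 (t+1)).pos (!(!b3)) := by
          have := hf2.2.2.2 (by norm_num) hpos'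
          exact fun hh => this hh.symm
        have hd3n : dOf u (run u A sched c0 (t+1)) b3 = dOf u (run u A sched c0 t) b3 / 2 := by
          rw [hf3.1]
          rw [show |(-1:ℝ)/2| = 1/2 from habsn]
          ring
        have hd2n : dOf u (run u A sched c0 (t+1)) (!b3) = dOf u (run u A sched c0 t) (!b3) / 2 := by
          rw [hf2.1, show |(-1:ℝ)/2| = 1/2 from habsn]
          ring
        by_cases hb : dOf u (run u A sched c0 t) (!b3) < 1
        · -- becomes s3 with distance in [1/4,1/2): osolves3
          have hs2' : (run u A sched c0 (t+1)).st (!b3) = .s3 := by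
            rw [run_st_act u A sched c0 h2, hst2, algo1_s2_ne_mid hd02 hdir hsm hb]
          obtain ⟨m, hm, hmeet⟩ := osolves3 u A sched c0 hu hsf (t+1) (!b3)
            (by simp only [Bool.not_not]; exact hs3')
            (by simp only [Bool.not_not]; rw [hd3n]; linarith)
            hposnew hs2'
            (by rw [hd2n]; linarith [not_lt.mp hsm])
          exact ⟨m, by omega, hmeet⟩
        · -- stays s2 but its direction now matches: osolves2
          have hs2' : (run u A sched c0 (t+1)).st (!b3) = .s2 d' := by
            rw [run_st_act u A sched c0 h2, hst2, algo1_s2_ne_big hd02 hdir hb]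
          have hflip := hf2.2.2.1 (by norm_num) hpos'
          have hdireq : dirOf u A (run u A sched c0 (t+1)) (!b3) = d' :=
            Dir.two _ _ _ hflip (Ne.symm hdir)
          obtain ⟨m, hm, hmeet⟩ := osolves2 u A sched c0 hu hsf n (t+1) (!b3) d'
            (by simp only [Bool.not_not]; exact hs3')
            (by simp only [Bool.not_not]; rw [hd3n]; linarith)
            hposnew hs2'
            (fun hh => absurd hdireq hh)
            (by rw [hd2n]
                have h2n : (0:ℝ) < 2^n := by positivity
                linarith)
          exact ⟨m, by omega, hmeet⟩
    · -- s3 robot finishes in place; s2 robot has d ≥ 1/2 and moves to the midpoint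
      have hd2ge : 1/2 ≤ dOf u (run u A sched c0 t) (!b3) := by
        rcases hinv with h | h
        · exact absurd h hc3
        · exact h
      have hp3 : (run u A sched c0 (t+1)).pos b3 = (run u A sched c0 t).pos b3 := by
        rw [run_pos_act u A sched c0 h1, hst3, algo1_s3_small hd03 (not_le.mp hc3) _, snd_pair]
        simp
      have hs3' : (run u A sched c0 (t+1)).st b3 = .finish := by
        rw [run_st_act u A sched c0 h1, hst3, algo1_s3_small hd03 (not_le.mp hc3) _]
      have hp2 : (run u A sched c0 (t+1)).pos (!b3) = (run u A sched c0 t).pos (!b3) +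
          (1/2 : ℝ) • ((run u A sched c0 t).pos (!(!b3)) - (run u A sched c0 t).pos (!b3)) := by
        by_cases hb : dOf u (run u A sched c0 t) (!b3) < 1
        · rw [run_pos_act u A sched c0 h2, hst2,
            algo1_s2_ne_mid hd02 hdir (not_lt.mpr hd2ge) hb, snd_pair]
        · rw [run_pos_act u A sched c0 h2, hst2, algo1_s2_ne_big hd02 hdir hb, snd_pair]
      have hdiffs := half_diffs (run u A sched c0 t) (run u A sched c0 (t+1)) (!b3) hp2
        (by simp only [Bool.not_not]; exact hp3)
      have hf3 := diff_facts u A _ _ b3 (1/2) (hu b3) (hdiffs b3)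
      have hf2 := diff_facts u A _ _ (!b3) (1/2) (hu (!b3)) (hdiffs (!b3))
      have hposnew : (run u A sched c0 (t+1)).pos (!b3) ≠ (run u A sched c0 (t+1)).pos (!(!b3)) := by
        exact (hf2.2.2.2 (by norm_num) hpos').symm
      by_cases hb : dOf u (run u A sched c0 t) (!b3) < 1
      · have hs2' : (run u A sched c0 (t+1)).st (!b3) = .s3 := by
          rw [run_st_act u A sched c0 h2, hst2,
            algo1_s2_ne_mid hd02 hdir (not_lt.mpr hd2ge) hb]
        obtain ⟨m, hm, hmeet⟩ := osolves3 u A sched c0 hu hsf (t+1) (!b3)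
          (by simp only [Bool.not_not]; exact hs3')
          (by simp only [Bool.not_not]; rw [hf3.1, habs]; linarith [not_le.mp hc3])
          hposnew hs2'
          (by rw [hf2.1, habs]; linarith)
        exact ⟨m, by omega, hmeet⟩
      · have hs2' : (run u A sched c0 (t+1)).st (!b3) = .s2 d' := by
          rw [run_st_act u A sched c0 h2, hst2, algo1_s2_ne_big hd02 hdir hb]
        obtain ⟨m, hm, hmeet⟩ := osolves2 u A sched c0 hu hsf n (t+1) (!b3) d'
          (by simp only [Bool.not_not]; exact hs3')
          (by simp only [Bool.not_not]; rw [hf3.1, habs]; linarith [not_le.mp hc3])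
          hposnew hs2'
          (fun _ => by rw [hf2.1, habs]; linarith [not_lt.mp hb])
          (by rw [hf2.1, habs]
              have h2n : (0:ℝ) < 2^n := by positivity
              linarith)
        exact ⟨m, by omega, hmeet⟩


set_option maxHeartbeats 1000000 in
/-- Two `s2≠` robots, at least one with observed distance ≥ 1/2 : rendezvous. -/
lemma asolves (hu : ∀ i, 0 < u i) (hsf : FairSched sched) :
    ∀ n, ∀ t,
    (∀ i, ∃ d', (run u A sched c0 t).st i = .s2 d' ∧ dirOf u A (run u A sched c0 t) i ≠ d') →
    (1/2 ≤ dOf u (run u A sched c0 t) false ∨ 1/2 ≤ dOf u (run u A sched c0 t) true) →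
    (∀ i, dOf u (run u A sched c0 t) i < 2^n) →
    (run u A sched c0 t).pos false ≠ (run u A sched c0 t).pos true →
    ∃ m, t ≤ m ∧ (run u A sched c0 m).pos false = (run u A sched c0 m).pos true := by
  intro n
  induction n using Nat.strong_induction_on with
  | _ n ih =>
  intro t hs2 hmax hbound hpos
  have hposi : ∀ i, (run u A sched c0 t).pos i ≠ (run u A sched c0 t).pos (!i) := by
    intro i
    cases i
    · simpa using hpos
    · simpa using hpos.symm
  have hd0 : ∀ i, dOf u (run u A sched c0 t) i ≠ 0 :=
    fun i => dOf_ne_zero u _ i (hu i) (by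
      have := hposi i
      exact fun hh => this hh.symm)
  have hother : ∀ i, dOf u (run u A sched c0 t) i < 1/2 →
      1/2 ≤ dOf u (run u A sched c0 t) (!i) := by
    intro i h
    cases i <;> simp only [Bool.not_false, Bool.not_true] <;>
      rcases hmax with hm | hm <;> simp_all <;> linarith
  have habs : |(1:ℝ)/2| = 1/2 := abs_of_pos (by norm_num)
  -- a single activated robot (the other idle)
  have key : ∀ i, sched t i = true → sched t (!i) = false →
      ∃ m, t ≤ m ∧ (run u A sched c0 m).pos false = (run u A sched c0 m).pos true := by
    intro i hi hni
    obtain ⟨d', hst, hdir⟩ := hs2 i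
    obtain ⟨d'', hst2, hdir2⟩ := hs2 (!i)
    by_cases h1 : dOf u (run u A sched c0 t) i < 1/2
    · -- finishes in place, nothing moves
      have hge := hother i h1
      have hpi : (run u A sched c0 (t+1)).pos i = (run u A sched c0 t).pos i := by
        rw [run_pos_act u A sched c0 hi, hst, algo1_s2_ne_small (hd0 i) hdir h1, snd_pair]
        simp
      have hsi : (run u A sched c0 (t+1)).st i = .finish := by
        rw [run_st_act u A sched c0 hi, hst, algo1_s2_ne_small (hd0 i) hdir h1]
      have hpni : (run u A sched c0 (t+1)).pos (!i) = (run u A sched c0 t).pos (!i) :=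
        run_pos_idle u A sched c0 hni
      have hdOfi : dOf u (run u A sched c0 (t+1)) i = dOf u (run u A sched c0 t) i :=
        dOf_congr u _ _ i hpi hpni
      have hdOfni : dOf u (run u A sched c0 (t+1)) (!i) = dOf u (run u A sched c0 t) (!i) :=
        dOf_congr u _ _ (!i) hpni (by simp only [Bool.not_not]; exact hpi)
      have hdirni : dirOf u A (run u A sched c0 (t+1)) (!i) = dirOf u A (run u A sched c0 t) (!i) :=
        dirOf_congr u A _ _ (!i) hpni (by simp only [Bool.not_not]; exact hpi)
      obtain ⟨m, hm, hmeet⟩ := osolves2 u A sched c0 hu hsf n (t+1) (!i) d''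
        (by simp only [Bool.not_not]; exact hsi)
        (by simp only [Bool.not_not]; rw [hdOfi]; linarith)
        (by rw [hpni]; simp only [Bool.not_not]; rw [hpi]
            exact fun hh => (hposi i) hh.symm)
        ((run_st_idle u A sched c0 hni).trans hst2)
        (fun _ => by rw [hdOfni]; exact hge)
        (by rw [hdOfni]; exact hbound (!i))
      exact ⟨m, by omega, hmeet⟩
    · -- moves to the midpoint
      have hpi : (run u A sched c0 (t+1)).pos i = (run u A sched c0 t).pos i +
          (1/2 : ℝ) • ((run u A sched c0 t).pos (!i) - (run u A sched c0 t).pos i) := by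
        by_cases h2 : dOf u (run u A sched c0 t) i < 1
        · rw [run_pos_act u A sched c0 hi, hst,
            algo1_s2_ne_mid (hd0 i) hdir h1 h2, snd_pair]
        · rw [run_pos_act u A sched c0 hi, hst, algo1_s2_ne_big (hd0 i) hdir h2, snd_pair]
      have hpni : (run u A sched c0 (t+1)).pos (!i) = (run u A sched c0 t).pos (!i) :=
        run_pos_idle u A sched c0 hni
      have hdiffs := half_diffs (run u A sched c0 t) (run u A sched c0 (t+1)) i hpi hpni
      have hfi := diff_facts u A _ _ i (1/2) (hu i) (hdiffs i)
      have hfni := diff_facts u A _ _ (!i) (1/2) (hu (!i)) (hdiffs (!i))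
      have hposnew : (run u A sched c0 (t+1)).pos i ≠ (run u A sched c0 (t+1)).pos (!i) := by
        have := hfi.2.2.2 (by norm_num) (fun hh => (hposi i) hh.symm)
        exact fun hh => this hh.symm
      have hsni : (run u A sched c0 (t+1)).st (!i) = .s2 d'' :=
        (run_st_idle u A sched c0 hni).trans hst2
      have hdirni : dirOf u A (run u A sched c0 (t+1)) (!i) = dirOf u A (run u A sched c0 t) (!i) :=
        hfni.2.1 (by norm_num)
      by_cases h2 : dOf u (run u A sched c0 t) i < 1
      · -- becomes s3 with d ∈ [1/4,1/2)
        have hsi : (run u A sched c0 (t+1)).st i = .s3 := by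
          rw [run_st_act u A sched c0 hi, hst, algo1_s2_ne_mid (hd0 i) hdir h1 h2]
        obtain ⟨m, hm, hmeet⟩ := esolves u A sched c0 hu hsf n (t+1) i d''
          hsi
          (by rw [hfi.1, habs]; linarith)
          hsni
          (by rw [hdirni]; exact hdir2)
          (Or.inl (by rw [hfi.1, habs]; linarith [not_lt.mp h1]))
          (by rw [hfni.1, habs]
              have h2n : (0:ℝ) < 2^n := by positivity
              linarith [hbound (!i)])
          hposnew
        exact ⟨m, by omega, hmeet⟩
      · -- stays s2, distance halves: recurse
        obtain ⟨k, rfl⟩ : ∃ k, n = k + 1 := by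
          cases n with
          | zero =>
            exfalso
            have hb := hbound i
            norm_num at hb
            exact h2 (by linarith)
          | succ k => exact ⟨k, rfl⟩
        have hsi : (run u A sched c0 (t+1)).st i = .s2 d' := by
          rw [run_st_act u A sched c0 hi, hst, algo1_s2_ne_big (hd0 i) hdir h2]
        have hdiri : dirOf u A (run u A sched c0 (t+1)) i = dirOf u A (run u A sched c0 t) i :=
          hfi.2.1 (by norm_num)
        have hhalf : ∀ j, dOf u (run u A sched c0 (t+1)) j = dOf u (run u A sched c0 t) j / 2 := by
          intro j
          rw [(diff_facts u A _ _ j (1/2) (hu j) (hdiffs j)).1, habs]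
          ring
        have hgei : 1/2 ≤ dOf u (run u A sched c0 (t+1)) i := by
          rw [hhalf i]
          linarith [not_lt.mp h2]
        obtain ⟨m, hm, hmeet⟩ := ih k (by omega) (t+1)
          (by intro j
              by_cases hji : j = i
              · subst hji
                exact ⟨d', hsi, by rw [hdiri]; exact hdir⟩
              · have hji' : j = !i := by cases j <;> cases i <;> simp_all
                subst hji'
                exact ⟨d'', hsni, by rw [hdirni]; exact hdir2⟩)
          (by cases i
              · exact Or.inl hgei
              · exact Or.inr hgei)
          (by intro j
              rw [hhalf j]
              have h2k : (2:ℝ)^(k+1) = 2^k * 2 := pow_succ 2 k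
              linarith [hbound j])
          (by have := (diff_facts u A _ _ false (1/2) (hu false) (hdiffs false)).2.2.2
                (by norm_num) (by simpa using hpos.symm)
              simp only [Bool.not_false] at this
              exact this.symm)
        exact ⟨m, by omega, hmeet⟩
  -- both robots activated, robot i has d ≥ 1/2, robot !i has d < 1/2
  have key2 : ∀ i, sched t i = true → sched t (!i) = true →
      1/2 ≤ dOf u (run u A sched c0 t) i → dOf u (run u A sched c0 t) (!i) < 1/2 →
      ∃ m, t ≤ m ∧ (run u A sched c0 m).pos false = (run u A sched c0 m).pos true := by
    intro i hi hni hgei hlti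
    obtain ⟨d', hst, hdir⟩ := hs2 i
    obtain ⟨d'', hst2, hdir2⟩ := hs2 (!i)
    have hpni : (run u A sched c0 (t+1)).pos (!i) = (run u A sched c0 t).pos (!i) := by
      rw [run_pos_act u A sched c0 hni, hst2, algo1_s2_ne_small (hd0 (!i)) hdir2 hlti, snd_pair]
      simp
    have hsni : (run u A sched c0 (t+1)).st (!i) = .finish := by
      rw [run_st_act u A sched c0 hni, hst2, algo1_s2_ne_small (hd0 (!i)) hdir2 hlti]
    have hpi : (run u A sched c0 (t+1)).pos i = (run u A sched c0 t).pos i +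
        (1/2 : ℝ) • ((run u A sched c0 t).pos (!i) - (run u A sched c0 t).pos i) := by
      by_cases h2 : dOf u (run u A sched c0 t) i < 1
      · rw [run_pos_act u A sched c0 hi, hst,
          algo1_s2_ne_mid (hd0 i) hdir (not_lt.mpr hgei) h2, snd_pair]
      · rw [run_pos_act u A sched c0 hi, hst, algo1_s2_ne_big (hd0 i) hdir h2, snd_pair]
    have hdiffs := half_diffs (run u A sched c0 t) (run u A sched c0 (t+1)) i hpi hpni
    have hfi := diff_facts u A _ _ i (1/2) (hu i) (hdiffs i)
    have hfni := diff_facts u A _ _ (!i) (1/2) (hu (!i)) (hdiffs (!i))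
    have hposnew : (run u A sched c0 (t+1)).pos i ≠ (run u A sched c0 (t+1)).pos (!i) := by
      have := hfi.2.2.2 (by norm_num) (fun hh => (hposi i) hh.symm)
      exact fun hh => this hh.symm
    have hdani : dOf u (run u A sched c0 (t+1)) (!i) ≤ 1 := by
      rw [hfni.1, habs]
      linarith
    by_cases h2 : dOf u (run u A sched c0 t) i < 1
    · have hsi : (run u A sched c0 (t+1)).st i = .s3 := by
        rw [run_st_act u A sched c0 hi, hst, algo1_s2_ne_mid (hd0 i) hdir (not_lt.mpr hgei) h2]
      obtain ⟨m, hm, hmeet⟩ := osolves3 u A sched c0 hu hsf (t+1) i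
        hsni hdani hposnew hsi
        (by rw [hfi.1, habs]; linarith)
      exact ⟨m, by omega, hmeet⟩
    · have hsi : (run u A sched c0 (t+1)).st i = .s2 d' := by
        rw [run_st_act u A sched c0 hi, hst, algo1_s2_ne_big (hd0 i) hdir h2]
      obtain ⟨m, hm, hmeet⟩ := osolves2 u A sched c0 hu hsf n (t+1) i d'
        hsni hdani hposnew hsi
        (fun _ => by rw [hfi.1, habs]; linarith [not_lt.mp h2])
        (by rw [hfi.1, habs]
            have h2n : (0:ℝ) < 2^n := by positivity
            linarith [hbound i])
      exact ⟨m, by omega, hmeet⟩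
  rcases sched_cases sched hsf t false with ⟨ha, hb⟩ | ⟨ha, hb⟩ | ⟨ha, hb⟩
  · exact key false ha hb
  · exact key true (by simpa using hb) (by simpa using ha)
  · -- both activated
    by_cases hf : 1/2 ≤ dOf u (run u A sched c0 t) false
    · by_cases ht : 1/2 ≤ dOf u (run u A sched c0 t) true
      · -- both move to the midpoint: meeting
        obtain ⟨d', hst, hdir⟩ := hs2 false
        obtain ⟨d'', hst2, hdir2⟩ := hs2 true
        have hb' : sched t true = true := by simpa using hb
        have hcoef : ∀ i (dd : Dir), (run u A sched c0 t).st i = .s2 dd →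
            dirOf u A (run u A sched c0 t) i ≠ dd →
            1/2 ≤ dOf u (run u A sched c0 t) i →
            (algo1 ((run u A sched c0 t).st i) (dOf u (run u A sched c0 t) i)
              (dirOf u A (run u A sched c0 t) i)).2 = 1/2 := by
          intro i dd hs hd hge
          by_cases h2 : dOf u (run u A sched c0 t) i < 1
          · rw [hs, algo1_s2_ne_mid (hd0 i) hd (not_lt.mpr hge) h2, snd_pair]
          · rw [hs, algo1_s2_ne_big (hd0 i) hd h2, snd_pair]
        have hp1 : (run u A sched c0 (t+1)).pos false = (run u A sched c0 t).pos false +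
            (1/2 : ℝ) • ((run u A sched c0 t).pos true - (run u A sched c0 t).pos false) := by
          rw [run_pos_act u A sched c0 ha, hcoef false d' hst hdir hf]
          simp only [Bool.not_false]
        have hp2 : (run u A sched c0 (t+1)).pos true = (run u A sched c0 t).pos true +
            (1/2 : ℝ) • ((run u A sched c0 t).pos false - (run u A sched c0 t).pos true) := by
          rw [run_pos_act u A sched c0 hb', hcoef true d'' hst2 hdir2 ht]
          simp only [Bool.not_true]
        refine ⟨t+1, by omega, ?_⟩
        rw [hp1, hp2]
        module
      · exact key2 false ha (by simpa using hb) hf (by simpa using not_le.mp ht)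
    · rcases hmax with hm | hm
      · exact absurd hm hf
      · exact key2 true (by simpa using hb) (by simpa using ha) hm (by simpa using not_le.mp hf)


set_option maxHeartbeats 1000000 in
lemma main_s1 (u : Bool → ℝ) (A : Bool → Frame) (sched : ℕ → Bool → Bool) (c0 : Config)
    (hu : ∀ i, 0 < u i) (hsf : FairSched sched)
    (hst : ∀ i, (run u A sched c0 0).st i = .s1)
    (hd : ∀ i, 1 < dOf u (run u A sched c0 0) i)
    (hpos : (run u A sched c0 0).pos false ≠ (run u A sched c0 0).pos true) :
    ∃ m, (run u A sched c0 m).pos false = (run u A sched c0 m).pos true := by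
  have hposi : ∀ i, (run u A sched c0 0).pos i ≠ (run u A sched c0 0).pos (!i) := by
    intro i
    cases i
    · simpa using hpos
    · simpa using hpos.symm
  have hd0 : ∀ i, dOf u (run u A sched c0 0) i ≠ 0 := by
    intro i
    have := hd i
    intro hh
    rw [hh] at this
    linarith
  have key : ∀ i, sched 0 i = true → sched 0 (!i) = false →
      ∃ m, (run u A sched c0 m).pos false = (run u A sched c0 m).pos true := by
    intro i hi hni
    have hpi : (run u A sched c0 1).pos i = (run u A sched c0 0).pos (!i) := by
      rw [run_pos_act u A sched c0 hi, hst i, algo1_s1_gt (hd i) _, snd_pair]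
      module
    exact ⟨1, meets_of _ i ((run u A sched c0 0).pos (!i)) hpi
      (run_pos_idle u A sched c0 hni)⟩
  rcases sched_cases sched hsf 0 false with ⟨ha, hb⟩ | ⟨ha, hb⟩ | ⟨ha, hb⟩
  · exact key false ha hb
  · exact key true (by simpa using hb) (by simpa using ha)
  · -- both activated at round 0: they swap positions
    have hact : ∀ i, sched 0 i = true := by
      intro i
      cases i
      · exact ha
      · simpa using hb
    have hp1 : (run u A sched c0 1).pos false = (run u A sched c0 0).pos false +
        (1:ℝ) • ((run u A sched c0 0).pos (!false) - (run u A sched c0 0).pos false) := by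
      rw [run_pos_act u A sched c0 (hact false), hst false, algo1_s1_gt (hd false) _, snd_pair]
    have hp2 : (run u A sched c0 1).pos (!false) = (run u A sched c0 0).pos (!false) +
        (1:ℝ) • ((run u A sched c0 0).pos (!(!false)) - (run u A sched c0 0).pos (!false)) := by
      rw [run_pos_act u A sched c0 (hact (!false)), hst (!false),
        algo1_s1_gt (hd (!false)) _, snd_pair]
    simp only [Bool.not_not] at hp2
    have hdiffs := two_move_diffs (run u A sched c0 0) (run u A sched c0 1) false 1 1 hp1 hp2
    rw [show (1:ℝ) - 1 - 1 = -1 by norm_num] at hdiffs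
    have hfacts := fun i => diff_facts u A _ _ i (-1) (hu i) (hdiffs i)
    have habs1 : |(-1:ℝ)| = 1 := by norm_num
    have hdnew : ∀ i, dOf u (run u A sched c0 1) i = dOf u (run u A sched c0 0) i := by
      intro i
      rw [(hfacts i).1, habs1, one_mul]
    have hstnew : ∀ i, (run u A sched c0 1).st i = .s2 (dirOf u A (run u A sched c0 0) i) := by
      intro i
      rw [run_st_act u A sched c0 (hact i), hst i, algo1_s1_gt (hd i) _]
    have hdirnew : ∀ i, dirOf u A (run u A sched c0 1) i ≠ dirOf u A (run u A sched c0 0) i := by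
      intro i
      exact (hfacts i).2.2.1 (by norm_num) (hposi i |>.symm)
    have hposnew : (run u A sched c0 1).pos false ≠ (run u A sched c0 1).pos true := by
      have := (hfacts false).2.2.2 (by norm_num) (hposi false |>.symm)
      simp only [Bool.not_false] at this
      exact this.symm
    obtain ⟨n1, hn1⟩ := pow_unbounded_of_one_lt (dOf u (run u A sched c0 1) false) one_lt_two
    obtain ⟨n2, hn2⟩ := pow_unbounded_of_one_lt (dOf u (run u A sched c0 1) true) one_lt_two
    obtain ⟨m, _, hmeet⟩ := asolves u A sched c0 hu hsf (n1 + n2) 1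
      (fun i => ⟨dirOf u A (run u A sched c0 0) i, hstnew i, hdirnew i⟩)
      (Or.inl (by rw [hdnew false]; linarith [hd false]))
      (by intro i
          have hmono : ∀ a b : ℕ, a ≤ b → (2:ℝ)^a ≤ 2^b := fun a b hab =>
            pow_le_pow_right₀ (by norm_num) hab
          cases i
          · exact lt_of_lt_of_le hn1 (hmono n1 (n1+n2) (by omega))
          · exact lt_of_lt_of_le hn2 (hmono n2 (n1+n2) (by omega)))
      hposnew
    exact ⟨m, hmeet⟩

end Sol


/-- Lemma 11: `(S_1, S_1, (1, ∞), (1, ∞))↓`. -/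
theorem lemma_l1 :
    Down Cond.s1 Cond.s1 (Set.Ioi (1 : ℝ)) (Set.Ioi (1 : ℝ)) := by
  intro u A hu c0 hsatf hdf hsatt hdt sched hsf
  have hstf : c0.st false = .s1 := hsatf
  have hstt : c0.st true = .s1 := hsatt
  have hst : ∀ i, (run u A sched c0 0).st i = .s1 := by
    intro i
    cases i
    · exact hstf
    · exact hstt
  have hdOf : ∀ i, 1 < dOf u (run u A sched c0 0) i := by
    intro i
    cases i
    · exact Set.mem_Ioi.mp hdf
    · exact Set.mem_Ioi.mp hdt
  have hpos : (run u A sched c0 0).pos false ≠ (run u A sched c0 0).pos true := by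
    intro h
    have h1 := hdOf false
    have h2 : dOf u (run u A sched c0 0) false = 0 := by
      unfold dOf
      rw [show (run u A sched c0 0).pos (!false) = (run u A sched c0 0).pos false from by
        simp only [Bool.not_false]
        exact h.symm]
      exact obsDist_self _ _
    rw [h2] at h1
    linarith
  obtain ⟨m, hmeet⟩ := main_s1 u A sched c0 hu hsf hst hdOf hpos
  exact ⟨m, fun n hn i => freeze u A sched c0 hmeet n hn i⟩
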